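/- If u and v are nonzero monomials in the generators s, t of R₂ and u = v as elements of R₂, then u and v are freely equal (identical as words in s and t). -/

import Mathlib

/-!
The tree-indexed vector space `V` over `ℚ` with basis the free monoid on two letters
(encoded as `List Bool`, with `false` the letter `0` and `true` the letter `1`).
The recursive matrices `s = [[0,0],[1,0]]` and `t = [[0,t],[0,s]]` of the ring `R₂`
act on the decomposition `V = ℚ·φ ⊕ 0V ⊕ 1V` by the block-matrix recursion.
-/

noncomputable section

abbrev V : Type := List Bool →₀ ℚ

/-- Prefixing by a letter: the embedding `V → yV`. -/
def pre (b : Bool) : V →ₗ[ℚ] V := Finsupp.lmapDomain ℚ ℚ (List.cons b)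

/-- Value of `s = [[0,0],[1,0]]` on a basis word. -/
def Sfun : List Bool → V
  | [] => 0
  | false :: u => Finsupp.single (true :: u) 1
  | true :: _ => 0

/-- Value of `t = [[0,t],[0,s]]` on a basis word, by recursion. -/
def Tfun : List Bool → V
  | [] => 0
  | false :: _ => 0
  | true :: u => pre false (Tfun u) + pre true (Sfun u)

/-- The generator `s` of `R₂`. -/
def sR : Module.End ℚ V := Finsupp.linearCombination ℚ Sfun

/-- The generator `t` of `R₂`. -/
def tR : Module.End ℚ V := Finsupp.linearCombination ℚ Tfun

/-- The level-preserving operator with block form `[[e,0,0],[0,A,B],[0,C,D]]` on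
`V = ℚ·φ ⊕ 0V ⊕ 1V`, written `e ⊕ [[A,B],[C,D]]`. -/
def blk (e : ℚ) (A B C D : Module.End ℚ V) : Module.End ℚ V :=
  Finsupp.linearCombination ℚ (fun w => match w with
    | [] => Finsupp.single ([] : List Bool) e
    | false :: u => pre false (A (Finsupp.single u 1)) + pre true (C (Finsupp.single u 1))
    | true :: u => pre false (B (Finsupp.single u 1)) + pre true (D (Finsupp.single u 1)))

/-- The monomial in `s, t` given by a word (`false ↦ s`, `true ↦ t`). -/
def mono (w : List Bool) : Module.End ℚ V :=
  (w.map (fun b => if b then tR else sR)).prod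

/-- The ring `R₂` generated by `s` and `t` (a non-unital subring of `End ℚ V`). -/
def R2 : NonUnitalSubring (Module.End ℚ V) := NonUnitalSubring.closure {sR, tR}

end

noncomputable section

/-! ### auxiliary combinatorics -/

def Sstep : List Bool → Option (List Bool)
  | false :: u => some (true :: u)
  | _ => none

def Tstep : List Bool → Option (List Bool)
  | true :: false :: u => some (true :: true :: u)
  | true :: true :: u => (Tstep (true :: u)).map (List.cons false)
  | _ => none

def step (b : Bool) : List Bool → Option (List Bool) :=
  if b then Tstep else Sstep

def run : List Bool → List Bool → Option (List Bool)
  | [], x => some x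
  | b :: w, x => (run w x).bind (step b)

def wt : List Bool → ℕ
  | [] => 0
  | b :: u => (cond b 1 0) + 2 * wt u

lemma pre_single (b : Bool) (u : List Bool) :
    pre b (Finsupp.single u 1) = Finsupp.single (b :: u) 1 := by
  simp [pre, Finsupp.mapDomain_single]

lemma Sfun_eq (x : List Bool) :
    Sfun x = (Sstep x).elim 0 (fun y => Finsupp.single y 1) := by
  match x with
  | [] => simp [Sfun, Sstep]
  | false :: u => simp [Sfun, Sstep]
  | true :: u => simp [Sfun, Sstep]

lemma Tfun_eq (x : List Bool) :
    Tfun x = (Tstep x).elim 0 (fun y => Finsupp.single y 1) := by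
  match x with
  | [] => simp [Tfun, Tstep]
  | false :: u => simp [Tfun, Tstep]
  | [true] => simp [Tfun, Tstep, Sfun]
  | true :: false :: u => simp [Tfun, Tstep, Sfun, pre_single]
  | true :: true :: u =>
      have ih := Tfun_eq (true :: u)
      rw [show Tfun (true :: true :: u) = pre false (Tfun (true :: u)) + pre true (Sfun (true :: u)) from rfl]
      rw [ih]
      cases h : Tstep (true :: u) with
      | none => simp [Tstep, h, Sfun]
      | some z => simp [Tstep, h, Sfun, pre_single]

lemma op_single (b : Bool) (x : List Bool) :
    (if b then tR else sR) (Finsupp.single x 1)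
      = (step b x).elim 0 (fun y => Finsupp.single y 1) := by
  cases b <;>
    simp [sR, tR, step, Finsupp.linearCombination_single, Sfun_eq, Tfun_eq]

lemma mono_nil : mono [] = 1 := rfl

lemma mono_cons (b : Bool) (w : List Bool) :
    mono (b :: w) = (if b then tR else sR) * mono w := by
  simp [mono]

lemma mono_single (w x : List Bool) :
    mono w (Finsupp.single x 1)
      = (run w x).elim 0 (fun y => Finsupp.single y 1) := by
  induction w with
  | nil => simp [mono_nil, run]
  | cons b w ih =>
      rw [mono_cons, Module.End.mul_apply, ih]
      cases h : run w x with
      | none => simp [run, h]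
      | some y => simp [run, h, op_single]

lemma Tstep_wt : ∀ x y, Tstep x = some y → wt x < wt y := by
  intro x
  match x with
  | [] => intro y h; simp [Tstep] at h
  | false :: u => intro y h; simp [Tstep] at h
  | [true] => intro y h; simp [Tstep] at h
  | true :: false :: u =>
      intro y h
      simp [Tstep] at h
      subst h
      simp [wt]
  | true :: true :: u =>
      intro y h
      simp only [Tstep, Option.map_eq_some_iff] at h
      obtain ⟨z, hz, rfl⟩ := h
      have ih := Tstep_wt (true :: u) z hz
      simp [wt] at ih ⊢
      omega

lemma step_wt (b : Bool) (x y : List Bool) (h : step b x = some y) : wt x < wt y := by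
  cases b with
  | false =>
      match x with
      | [] => simp [step, Sstep] at h
      | false :: u =>
          simp [step, Sstep] at h
          subst h; simp [wt]
      | true :: u => simp [step, Sstep] at h
  | true => exact Tstep_wt x y h

lemma run_wt_le : ∀ w x y, run w x = some y → wt x ≤ wt y := by
  intro w
  induction w with
  | nil => intro x y h; simp [run] at h; subst h; exact le_rfl
  | cons b w ih =>
      intro x y h
      simp only [run, Option.bind_eq_some_iff] at h
      obtain ⟨z, hz, hby⟩ := h
      exact (ih x z hz).trans (step_wt b z y hby).le

lemma run_wt (w : List Bool) (hw : w ≠ []) (x y : List Bool)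
    (h : run w x = some y) : wt x < wt y := by
  match w with
  | [] => exact absurd rfl hw
  | b :: w =>
      simp only [run, Option.bind_eq_some_iff] at h
      obtain ⟨z, hz, hby⟩ := h
      exact lt_of_le_of_lt (run_wt_le w x z hz) (step_wt b z y hby)

lemma step_det (b b' : Bool) (x y y' : List Bool)
    (h : step b x = some y) (h' : step b' x = some y') : b = b' := by
  cases b <;> cases b' <;> try rfl
  · -- b = false, b' = true : Sstep and Tstep both some
    exfalso
    match x with
    | [] => simp [step, Sstep] at h
    | false :: u => simp [step, Tstep] at h'
    | true :: u => simp [step, Sstep] at h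
  · exfalso
    match x with
    | [] => simp [step, Sstep] at h'
    | false :: u => simp [step, Tstep] at h
    | true :: u => simp [step, Sstep] at h'

lemma run_append : ∀ (w₁ w₂ x : List Bool),
    run (w₁ ++ w₂) x = (run w₂ x).bind (run w₁) := by
  intro w₁
  induction w₁ with
  | nil => intro w₂ x; simp [run]
  | cons b w ih =>
      intro w₂ x
      simp only [List.cons_append, run, List.append_eq, ih, Option.bind_assoc]

lemma forcedAux : ∀ (n : ℕ) (u v x yu yv : List Bool), u.length + v.length ≤ n →
    run u x = some yu → run v x = some yv → u <:+ v ∨ v <:+ u := by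
  intro n
  induction n with
  | zero =>
      intro u v x yu yv hn hu hv
      have : u = [] := by
        cases u with
        | nil => rfl
        | cons a l => simp at hn
      subst this; exact Or.inl (List.nil_suffix)
  | succ n ih =>
      intro u v x yu yv hn hu hv
      rcases u.eq_nil_or_concat with rfl | ⟨u', a, rfl⟩
      · exact Or.inl List.nil_suffix
      rcases v.eq_nil_or_concat with rfl | ⟨v', b, rfl⟩
      · exact Or.inr List.nil_suffix
      simp only [List.concat_eq_append] at hu hv hn ⊢
      rw [run_append] at hu hv
      have hra : run [a] x = (step a x) := by simp [run]
      have hrb : run [b] x = (step b x) := by simp [run]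
      rw [hra] at hu; rw [hrb] at hv
      rcases Option.bind_eq_some_iff.mp hu with ⟨z, hz, hu'⟩
      rcases Option.bind_eq_some_iff.mp hv with ⟨z', hz', hv'⟩
      have hab : a = b := step_det a b x z z' hz hz'
      subst hab
      rw [hz] at hz'
      have hzz : z = z' := by injection hz'
      subst hzz
      have hlen : u'.length + v'.length ≤ n := by
        simp [List.length_append] at hn; omega
      rcases ih u' v' z yu yv hlen hu' hv' with ⟨c, hc⟩ | ⟨c, hc⟩
      · exact Or.inl ⟨c, by rw [← List.append_assoc, hc]⟩
      · exact Or.inr ⟨c, by rw [← List.append_assoc, hc]⟩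

lemma forced (u v x yu yv : List Bool)
    (hu : run u x = some yu) (hv : run v x = some yv) : u <:+ v ∨ v <:+ u :=
  forcedAux (u.length + v.length) u v x yu yv le_rfl hu hv


/-- If `u` and `v` are nonzero monomials in the generators `s, t` of `R₂` and `u = v`
as elements of `R₂`, then `u` and `v` are freely equal (identical as words). -/
theorem monomials_freely_equal (u v : List Bool) (hu : u ≠ []) (hv : v ≠ [])
    (hu0 : mono u ≠ 0) (hv0 : mono v ≠ 0) (h : mono u = mono v) : u = v := by
  -- the partial maps on basis words agree
  have key : ∀ x, run u x = run v x := by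
    intro x
    have h' : mono u (Finsupp.single x 1) = mono v (Finsupp.single x 1) := by rw [h]
    rw [mono_single, mono_single] at h'
    cases hru : run u x with
    | none =>
        cases hrv : run v x with
        | none => rfl
        | some y =>
            rw [hru, hrv] at h'
            simp only [Option.elim_none, Option.elim_some, eq_comm, Finsupp.single_eq_zero] at h'
            exact absurd h'.symm one_ne_zero
    | some y =>
        cases hrv : run v x with
        | none =>
            rw [hru, hrv] at h'
            simp only [Option.elim_none, Option.elim_some, Finsupp.single_eq_zero] at h'
            exact absurd h' one_ne_zero
        | some y' =>
            rw [hru, hrv] at h'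
            simp at h'
            have : y = y' := by
              by_contra hne
              rw [Finsupp.single_eq_single_iff] at h'
              rcases h' with ⟨h1, _⟩ | ⟨h1, _⟩
              · exact hne h1
              · exact one_ne_zero h1
            rw [this]
  -- a witness where `run u` is defined
  have hex : ∃ x y, run u x = some y := by
    by_contra hno
    push_neg at hno
    have hnone : ∀ x, run u x = none := by
      intro x
      cases hx : run u x with
      | none => rfl
      | some y => exact absurd hx (hno x y)
    apply hu0
    apply Finsupp.lhom_ext
    intro a b
    have h1 : (Finsupp.single a b : V) = b • Finsupp.single a 1 := by
      rw [Finsupp.smul_single, smul_eq_mul, mul_one]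
    rw [h1, map_smul, mono_single, hnone a]
    simp
  obtain ⟨x, y, hxy⟩ := hex
  have hvy : run v x = some y := by rw [← key, hxy]
  rcases forced u v x y y hxy hvy with ⟨z, hz⟩ | ⟨z, hz⟩
  · -- v = z ++ u
    rcases eq_or_ne z [] with rfl | hzne
    · exact hz
    · exfalso
      have : run v x = (run u x).bind (run z) := by rw [← hz, run_append]
      rw [hxy] at this
      simp only [Option.bind_some] at this
      rw [hvy] at this
      exact absurd (run_wt z hzne y y this.symm) (lt_irrefl _)
  · -- u = z ++ v
    rcases eq_or_ne z [] with rfl | hzne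
    · exact hz.symm
    · exfalso
      have : run u x = (run v x).bind (run z) := by rw [← hz, run_append]
      rw [hvy] at this
      simp only [Option.bind_some] at this
      rw [hxy] at this
      exact absurd (run_wt z hzne y y this.symm) (lt_irrefl _)

end
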